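/- arXiv:2111.01725 — 2 statements merged into one kernel-verified Lean document; each statement's English description precedes it below -/
import Mathlib

section
/- There exist constants c₁, c₂ > 0 and t₀ > 0, depending only on K, such that for every x ∈ ∂K and every 0 < t ≤ t₀, the inscribed triangle of the cap satisfies c₁ · t^{3/2} ≤ A(Δ(x,t)) ≤ c₂ · t^{3/2}; consequently, for each j ∈ {0,1,2}, (c₁/400) · t^{3/2} ≤ A(Δ_j(x,t)) ≤ (c₂/400) · t^{3/2}. -/
open MeasureTheory ProbabilityTheory
open scoped RealInnerProductSpace

noncomputable section

/-- The Euclidean plane. -/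
abbrev E2 : Type := EuclideanSpace ℝ (Fin 2)

/-- The `r`-spindle convex hull of a set `X`: the intersection of all closed discs of
radius `r` containing `X`. -/
def spindleHull (r : ℝ) (X : Set E2) : Set E2 :=
  ⋂ v ∈ {v : E2 | X ⊆ Metric.closedBall v r}, Metric.closedBall v r

/-- `K` slides freely inside a disc of radius `ρ`. -/
def SlidesFreelyInDisc (K : Set E2) (ρ : ℝ) : Prop :=
  ∀ x ∈ frontier K, ∃ v : E2, dist x v = ρ ∧ K ⊆ Metric.closedBall v ρ

/-- A disc of radius `ρ` slides freely inside `K`. -/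
def DiscSlidesFreelyIn (K : Set E2) (ρ : ℝ) : Prop :=
  ∀ x ∈ frontier K, ∃ v : E2, dist x v = ρ ∧ Metric.closedBall v ρ ⊆ K

/-- `u` is an outer unit normal vector of `K` at the boundary point `x`. -/
def IsOuterNormal (K : Set E2) (x u : E2) : Prop :=
  ‖u‖ = 1 ∧ ∀ y ∈ K, (inner ℝ (y - x) u : ℝ) ≤ 0

/-- The triangle with vertices `x`, `w₁`, `w₂`. -/
def capTriangle (x w₁ w₂ : E2) : Set E2 := convexHull ℝ {x, w₁, w₂}

/-- The image of `S` under the homothety of centre `c` and ratio `1/20`. -/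
def shrink (c : E2) (S : Set E2) : Set E2 := (fun p => c + (20:ℝ)⁻¹ • (p - c)) '' S

/-- The image of `S` under the homothety of centre `c` and ratio `1/3`. -/
def shrinkThird (c : E2) (S : Set E2) : Set E2 := (fun p => c + (3:ℝ)⁻¹ • (p - c)) '' S

/-- `Â(z₀)`: the area gained by adding the point `z₀` to `{z₁, z₂}` in the spindle hull
of radius `1`. -/
def Ahat (z₀ z₁ z₂ : E2) : ℝ :=
  (volume (spindleHull 1 {z₀, z₁, z₂})).toReal
    - (volume (spindleHull 1 ({z₁, z₂} : Set E2))).toReal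

/-- The disc-cap of `K` with vertex `y` (outer unit normal `u`) and height `t`. -/
def discCap (K : Set E2) (y u : E2) (t : ℝ) : Set E2 :=
  K \ Metric.ball (y - (1 + t) • u) 1

/-- The uniform (normalized Lebesgue) measure on a set `S`. -/
def unif (S : Set E2) : Measure E2 := (volume S)⁻¹ • volume.restrict S

lemma decomp (b : OrthonormalBasis (Fin 2) ℝ E2) (x z : E2) :
    z = x + (⟪b 0, z - x⟫ : ℝ) • b 0 + (⟪b 1, z - x⟫ : ℝ) • b 1 := by
  have := b.sum_repr' (z - x)
  rw [Fin.sum_univ_two] at this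
  rw [add_assoc, this]; abel

lemma coord0 (b : OrthonormalBasis (Fin 2) ℝ E2) (x : E2) (a c : ℝ) :
    (⟪b 0, (x + a • b 0 + c • b 1) - x⟫ : ℝ) = a := by
  have h01 : (⟪b 0, b 1⟫ : ℝ) = 0 := b.orthonormal.2 (by decide)
  have hn0 : (⟪b 0, b 0⟫ : ℝ) = 1 := by
    rw [real_inner_self_eq_norm_sq, b.orthonormal.1 0]; norm_num
  rw [add_assoc, add_sub_cancel_left, inner_add_right, real_inner_smul_right,
    real_inner_smul_right, h01, hn0]; ring

lemma coord1 (b : OrthonormalBasis (Fin 2) ℝ E2) (x : E2) (a c : ℝ) :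
    (⟪b 1, (x + a • b 0 + c • b 1) - x⟫ : ℝ) = c := by
  have h10 : (⟪b 1, b 0⟫ : ℝ) = 0 := b.orthonormal.2 (by decide)
  have hn1 : (⟪b 1, b 1⟫ : ℝ) = 1 := by
    rw [real_inner_self_eq_norm_sq, b.orthonormal.1 1]; norm_num
  rw [add_assoc, add_sub_cancel_left, inner_add_right, real_inner_smul_right,
    real_inner_smul_right, h10, hn1]; ring

lemma norm_comb (b : OrthonormalBasis (Fin 2) ℝ E2) (a c : ℝ) :
    ‖a • b 0 + c • b 1‖ ^ 2 = a ^ 2 + c ^ 2 := by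
  have h01 : (⟪b 0, b 1⟫ : ℝ) = 0 := b.orthonormal.2 (by decide)
  have hn0 : ‖b 0‖ = 1 := b.orthonormal.1 0
  have hn1 : ‖b 1‖ = 1 := b.orthonormal.1 1
  rw [norm_add_sq_real, real_inner_smul_left, real_inner_smul_right, h01,
    norm_smul, norm_smul, hn0, hn1]
  simp [mul_pow, sq_abs]

/-- Points determined by coordinates. -/
lemma coord_eq (b : OrthonormalBasis (Fin 2) ℝ E2) (x z z' : E2)
    (h0 : (⟪b 0, z - x⟫ : ℝ) = ⟪b 0, z' - x⟫) (h1 : (⟪b 1, z - x⟫ : ℝ) = ⟪b 1, z' - x⟫) :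
    z = z' := by
  rw [decomp b x z, decomp b x z', h0, h1]

/-- A point whose second coordinate lies between those of `a` and `a'` (all on the same
horizontal line) lies on the segment. -/
lemma seg_helper (b : OrthonormalBasis (Fin 2) ℝ E2) (x : E2) (a a' q : E2) (s : ℝ)
    (ha : (⟪b 0, a - x⟫ : ℝ) = s) (ha' : (⟪b 0, a' - x⟫ : ℝ) = s)
    (hq : (⟪b 0, q - x⟫ : ℝ) = s)
    (h1 : (⟪b 1, a - x⟫ : ℝ) ≤ ⟪b 1, q - x⟫) (h2 : (⟪b 1, q - x⟫ : ℝ) ≤ ⟪b 1, a' - x⟫) :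
    q ∈ segment ℝ a a' := by
  set c₁ : ℝ := ⟪b 1, a - x⟫ with hc₁
  set c₂ : ℝ := ⟪b 1, a' - x⟫ with hc₂
  set c : ℝ := ⟪b 1, q - x⟫ with hc
  rcases eq_or_lt_of_le (le_trans h1 h2) with heq | hlt
  · -- c₁ = c₂, so q = a
    have hcc : c = c₁ := le_antisymm (heq ▸ h2) h1
    have : q = a := coord_eq b x q a (by rw [ha, hq]) (by rw [← hc, ← hc₁, hcc])
    rw [this]; exact left_mem_segment ℝ a a'
  · set μ : ℝ := (c - c₁) / (c₂ - c₁) with hμ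
    have hd : c₂ - c₁ > 0 := by linarith
    have hμ0 : 0 ≤ μ := div_nonneg (by linarith) (by linarith)
    have hμ1 : μ ≤ 1 := by
      rw [div_le_one hd]; linarith
    refine ⟨1 - μ, μ, by linarith, hμ0, by ring, ?_⟩
    have hkey : (1 - μ) • a + μ • a' = q := by
      have hsc : (1 - μ) * c₁ + μ * c₂ = c := by
        have hm : μ * (c₂ - c₁) = c - c₁ := div_mul_cancel₀ _ (ne_of_gt hd)
        linear_combination hm
      rw [decomp b x a, decomp b x a', decomp b x q, ha, ha', hq, ← hc₁, ← hc₂, ← hc, ← hsc]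
      module
    exact hkey

/-- A point strictly between two others on the same horizontal line is in the open
segment. -/
lemma openseg_helper (b : OrthonormalBasis (Fin 2) ℝ E2) (x : E2) (w z z' : E2) (s : ℝ)
    (hw : (⟪b 0, w - x⟫ : ℝ) = s) (hz : (⟪b 0, z - x⟫ : ℝ) = s)
    (hz' : (⟪b 0, z' - x⟫ : ℝ) = s)
    (h1 : (⟪b 1, z - x⟫ : ℝ) < ⟪b 1, w - x⟫) (h2 : (⟪b 1, w - x⟫ : ℝ) < ⟪b 1, z' - x⟫) :
    w ∈ openSegment ℝ z z' := by
  set c₁ : ℝ := ⟪b 1, z - x⟫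
  set c₂ : ℝ := ⟪b 1, z' - x⟫
  set c : ℝ := ⟪b 1, w - x⟫
  set θ : ℝ := (c - c₁) / (c₂ - c₁) with hθ
  have hd : c₂ - c₁ > 0 := by linarith
  have hθ0 : 0 < θ := div_pos (by linarith) hd
  have hθ1 : θ < 1 := by rw [div_lt_one hd]; linarith
  refine ⟨1 - θ, θ, by linarith, hθ0, by ring, ?_⟩
  have hsc : (1 - θ) * c₁ + θ * c₂ = c := by
    have hm : θ * (c₂ - c₁) = c - c₁ := div_mul_cancel₀ _ (ne_of_gt hd)
    linear_combination hm
  rw [decomp b x z, decomp b x z', decomp b x w, hz, hz', hw]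
  rw [show (⟪b 1, w - x⟫ : ℝ) = c from rfl, ← hsc]
  module


lemma not_beyond (K : Set E2) (ρ₁ : ℝ) (hρ₁ : 0 < ρ₁) (hout : SlidesFreelyInDisc K ρ₁)
    (w z z' : E2) (hw : w ∈ frontier K) (hz : z ∈ K) (hz' : z' ∈ K) (hne : z ≠ z')
    (hmem : w ∈ openSegment ℝ z z') : False := by
  obtain ⟨v, hdist, hsub⟩ := hout w hw
  have hstrict := (strictConvex_closedBall ℝ v ρ₁).openSegment_subset
    (hsub hz) (hsub hz') hne hmem
  rw [interior_closedBall v (ne_of_gt hρ₁), Metric.mem_ball] at hstrict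
  exact absurd hdist (ne_of_lt hstrict)

lemma inner_center (K : Set E2) (x u : E2) (hu : ‖u‖ = 1)
    (hnormal : ∀ y ∈ K, (inner ℝ (y - x) u : ℝ) ≤ 0)
    (ρ₀ : ℝ) (hρ₀ : 0 < ρ₀) (v₀ : E2) (hd : dist x v₀ = ρ₀)
    (hsub : Metric.closedBall v₀ ρ₀ ⊆ K) : v₀ = x - ρ₀ • u := by
  have hy : v₀ + ρ₀ • u ∈ Metric.closedBall v₀ ρ₀ := by
    rw [Metric.mem_closedBall, dist_eq_norm, add_sub_cancel_left, norm_smul, hu]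
    simp [abs_of_pos hρ₀]
  have h1 : (inner ℝ (v₀ + ρ₀ • u - x) u : ℝ) ≤ 0 := hnormal _ (hsub hy)
  have huu : (⟪u, u⟫ : ℝ) = 1 := by
    rw [real_inner_self_eq_norm_sq, hu]; norm_num
  have h2 : (⟪v₀ - x, u⟫ : ℝ) ≤ -ρ₀ := by
    have heq : (inner ℝ (v₀ + ρ₀ • u - x) u : ℝ) = ⟪v₀ - x, u⟫ + ρ₀ := by
      rw [show v₀ + ρ₀ • u - x = (v₀ - x) + ρ₀ • u by abel, inner_add_left,
        real_inner_smul_left, huu]; ring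
    rw [heq] at h1; linarith
  have hnorm : ‖v₀ - x‖ = ρ₀ := by rw [← dist_eq_norm, dist_comm, hd]
  have h3 : ‖(v₀ - x) + ρ₀ • u‖ ^ 2 ≤ 0 := by
    rw [norm_add_sq_real, real_inner_smul_right, norm_smul, hu, hnorm,
      Real.norm_eq_abs, abs_of_pos hρ₀]
    nlinarith [h2]
  have h4 : (v₀ - x) + ρ₀ • u = 0 := by
    have := sq_nonneg ‖(v₀ - x) + ρ₀ • u‖
    have hn0 : ‖(v₀ - x) + ρ₀ • u‖ = 0 := by nlinarith
    exact norm_eq_zero.mp hn0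
  have h5 : v₀ - x = -(ρ₀ • u) := eq_neg_of_add_eq_zero_left h4
  rw [sub_eq_iff_eq_add] at h5
  rw [h5, neg_add_eq_sub]

lemma outer_center (K : Set E2) (x u : E2) (hu : ‖u‖ = 1)
    (ρ₀ ρ₁ : ℝ) (hρ₀ : 0 < ρ₀) (hρ₀₁ : ρ₀ ≤ ρ₁)
    (hball : Metric.closedBall (x - ρ₀ • u) ρ₀ ⊆ K)
    (v₁ : E2) (hd : dist x v₁ = ρ₁) (hsub : K ⊆ Metric.closedBall v₁ ρ₁) :
    v₁ = x - ρ₁ • u := by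
  set d : E2 := v₁ - x with hdd
  have hnd : ‖d‖ = ρ₁ := by rw [hdd, ← dist_eq_norm, dist_comm, hd]
  set m : E2 := d + ρ₀ • u with hm
  have key : ∀ w : E2, ‖w‖ = 1 → ‖ρ₀ • w - m‖ ≤ ρ₁ := by
    intro w hw
    have hmem : x - ρ₀ • u + ρ₀ • w ∈ Metric.closedBall (x - ρ₀ • u) ρ₀ := by
      rw [Metric.mem_closedBall, dist_eq_norm, add_sub_cancel_left, norm_smul, hw,
        Real.norm_eq_abs, abs_of_pos hρ₀]; simp
    have := hsub (hball hmem)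
    rw [Metric.mem_closedBall, dist_eq_norm] at this
    have heq : x - ρ₀ • u + ρ₀ • w - v₁ = ρ₀ • w - m := by
      rw [hm, hdd]; abel
    rwa [heq] at this
  have hdu : d = -(ρ₁ • u) → v₁ = x - ρ₁ • u := by
    intro h
    have : v₁ - x = -(ρ₁ • u) := h
    rw [sub_eq_iff_eq_add] at this
    rw [this, neg_add_eq_sub]
  by_cases hm0 : m = 0
  · -- then d = -ρ₀ u and ρ₀ = ρ₁
    have hd0 : d = -(ρ₀ • u) := eq_neg_of_add_eq_zero_left hm0
    have : ρ₀ = ρ₁ := by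
      have := hnd
      rw [hd0, norm_neg, norm_smul, hu, Real.norm_eq_abs, abs_of_pos hρ₀] at this
      linarith [this]
    exact hdu (by rw [hd0, this])
  · have hmn : 0 < ‖m‖ := norm_pos_iff.mpr hm0
    have h1 : ρ₀ + ‖m‖ ≤ ρ₁ := by
      have := key (-(‖m‖⁻¹ • m)) (by
        rw [norm_neg, norm_smul, Real.norm_eq_abs, abs_of_pos (inv_pos.mpr hmn),
          inv_mul_cancel₀ (ne_of_gt hmn)])
      rw [smul_neg, smul_smul] at this
      have heq : -((ρ₀ * ‖m‖⁻¹) • m) - m = -((ρ₀ * ‖m‖⁻¹ + 1) • m) := by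
        module
      rw [heq, norm_neg, norm_smul, Real.norm_eq_abs,
        abs_of_pos (by positivity : (0:ℝ) < ρ₀ * ‖m‖⁻¹ + 1)] at this
      have hexp : (ρ₀ * ‖m‖⁻¹ + 1) * ‖m‖ = ρ₀ + ‖m‖ := by
        field_simp
      rw [hexp] at this; exact this
    have h2 : ρ₁ - ρ₀ ≤ ‖m‖ := by
      have := norm_sub_norm_le d (-(ρ₀ • u))
      rw [sub_neg_eq_add, ← hm, hnd, norm_neg, norm_smul, hu, Real.norm_eq_abs,
        abs_of_pos hρ₀] at this
      linarith
    have hmeq : ‖m‖ = ρ₁ - ρ₀ := le_antisymm (by linarith) h2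
    -- compute inner product
    have hmsq : ‖m‖ ^ 2 = ρ₁ ^ 2 + 2 * ρ₀ * ⟪d, u⟫ + ρ₀ ^ 2 := by
      rw [hm, norm_add_sq_real, real_inner_smul_right, norm_smul, hu, hnd,
        Real.norm_eq_abs, abs_of_pos hρ₀]; ring
    have hinner : (⟪d, u⟫ : ℝ) = -ρ₁ := by
      rw [hmeq] at hmsq; nlinarith
    have hzero : ‖d + ρ₁ • u‖ ^ 2 = 0 := by
      rw [norm_add_sq_real, real_inner_smul_right, norm_smul, hu, hnd, hinner,
        Real.norm_eq_abs, abs_of_pos (lt_of_lt_of_le hρ₀ hρ₀₁)]; ring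
    have : d + ρ₁ • u = 0 := by
      have := sq_nonneg ‖d + ρ₁ • u‖
      have hn0 : ‖d + ρ₁ • u‖ = 0 := by nlinarith
      exact norm_eq_zero.mp hn0
    exact hdu (eq_neg_of_add_eq_zero_left this)

lemma volume_coordRect (b : OrthonormalBasis (Fin 2) ℝ E2) (x : E2) (I J : Set ℝ)
    (hI : MeasurableSet I) (hJ : MeasurableSet J) :
    volume {z : E2 | (⟪b 0, z - x⟫ : ℝ) ∈ I ∧ (⟪b 1, z - x⟫ : ℝ) ∈ J}
      = volume I * volume J := by
  set P : Fin 2 → Set ℝ := ![I, J] with hP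
  have hPm : ∀ i, MeasurableSet (P i) := by
    intro i; fin_cases i <;> simpa [P]
  have hset : {z : E2 | (⟪b 0, z - x⟫ : ℝ) ∈ I ∧ (⟪b 1, z - x⟫ : ℝ) ∈ J}
      = (fun z : E2 => z + (-x)) ⁻¹' ((fun y : E2 => ((MeasurableEquiv.toLp 2 (Fin 2 → ℝ)).symm)
          (b.repr y)) ⁻¹' Set.univ.pi P) := by
    ext z
    simp only [Set.mem_setOf_eq, Set.mem_preimage, Set.mem_pi, Set.mem_univ, true_implies]
    rw [Fin.forall_fin_two]
    have h0 : ((MeasurableEquiv.toLp 2 (Fin 2 → ℝ)).symm) (b.repr (z + -x)) 0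
        = ⟪b 0, z - x⟫ := by
      rw [← sub_eq_add_neg]; exact (b.repr_apply_apply _ _).symm ▸ rfl
    have h1 : ((MeasurableEquiv.toLp 2 (Fin 2 → ℝ)).symm) (b.repr (z + -x)) 1
        = ⟪b 1, z - x⟫ := by
      rw [← sub_eq_add_neg]; exact (b.repr_apply_apply _ _).symm ▸ rfl
    rw [h0, h1]
    simp [P]
  rw [hset]
  have hmp : MeasurePreserving (fun y : E2 => ((MeasurableEquiv.toLp 2 (Fin 2 → ℝ)).symm)
      (b.repr y)) volume volume :=
    (EuclideanSpace.volume_preserving_symm_measurableEquiv_toLp (Fin 2)).comp b.measurePreserving_repr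
  rw [measure_preimage_add_right]
  rw [hmp.measure_preimage (MeasurableSet.univ_pi hPm).nullMeasurableSet]
  rw [volume_pi_pi]
  simp [P, Fin.prod_univ_two]

lemma convex_coordRect (b : OrthonormalBasis (Fin 2) ℝ E2) (x : E2) (I J : Set ℝ)
    (hI : Convex ℝ I) (hJ : Convex ℝ J) :
    Convex ℝ {z : E2 | (⟪b 0, z - x⟫ : ℝ) ∈ I ∧ (⟪b 1, z - x⟫ : ℝ) ∈ J} := by
  intro p hp q hq a a' ha ha' hab
  have hx : a • p + a' • q - x = a • (p - x) + a' • (q - x) + (a + a' - 1) • x := by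
    module
  rw [hab] at hx
  simp only [sub_self, zero_smul, add_zero] at hx
  have key : ∀ w : E2, (⟪w, a • p + a' • q - x⟫ : ℝ)
      = a * ⟪w, p - x⟫ + a' * ⟪w, q - x⟫ := by
    intro w
    rw [hx, inner_add_right, real_inner_smul_right, real_inner_smul_right]
  constructor
  · rw [key (b 0)]
    have := hI hp.1 hq.1 ha ha' hab
    rwa [smul_eq_mul, smul_eq_mul] at this
  · rw [key (b 1)]
    have := hJ hp.2 hq.2 ha ha' hab
    rwa [smul_eq_mul, smul_eq_mul] at this

lemma between_seg (K : Set E2) (ρ₁ : ℝ) (hρ₁ : 0 < ρ₁) (hout : SlidesFreelyInDisc K ρ₁)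
    (b : OrthonormalBasis (Fin 2) ℝ E2) (x : E2) (t : ℝ) (w₁ w₂ q : E2)
    (hw₁F : w₁ ∈ frontier K) (hw₂F : w₂ ∈ frontier K)
    (hw₁K : w₁ ∈ K) (hw₂K : w₂ ∈ K) (hq : q ∈ K) (hne : w₁ ≠ w₂)
    (h1 : (⟪b 0, w₁ - x⟫ : ℝ) = -t) (h2 : (⟪b 0, w₂ - x⟫ : ℝ) = -t)
    (hq0 : (⟪b 0, q - x⟫ : ℝ) = -t) :
    q ∈ segment ℝ w₁ w₂ := by
  set c₁ : ℝ := ⟪b 1, w₁ - x⟫ with hc₁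
  set c₂ : ℝ := ⟪b 1, w₂ - x⟫ with hc₂
  set c : ℝ := ⟪b 1, q - x⟫ with hc
  have hcc : c₁ ≠ c₂ := by
    intro h
    exact hne (coord_eq b x w₁ w₂ (by rw [h1, h2]) h)
  have hqne : ∀ w : E2, (⟪b 1, w - x⟫ : ℝ) ≠ c → q ≠ w := by
    intro w hw heq
    rw [heq] at hc
    exact hw hc.symm
  have high : c ≤ max c₁ c₂ := by
    by_contra h
    push_neg at h
    rw [max_lt_iff] at h
    rcases lt_or_gt_of_ne hcc with hlt | hgt
    · exact not_beyond K ρ₁ hρ₁ hout w₂ w₁ q hw₂F hw₁K hq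
        (hqne w₁ (ne_of_lt h.1)).symm
        (openseg_helper b x w₂ w₁ q (-t) h2 h1 hq0 hlt h.2)
    · exact not_beyond K ρ₁ hρ₁ hout w₁ w₂ q hw₁F hw₂K hq
        (hqne w₂ (ne_of_lt h.2)).symm
        (openseg_helper b x w₁ w₂ q (-t) h1 h2 hq0 hgt h.1)
  have low : min c₁ c₂ ≤ c := by
    by_contra h
    push_neg at h
    rw [lt_min_iff] at h
    rcases lt_or_gt_of_ne hcc with hlt | hgt
    · exact not_beyond K ρ₁ hρ₁ hout w₁ q w₂ hw₁F hq hw₂K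
        (hqne w₂ (ne_of_gt h.2))
        (openseg_helper b x w₁ q w₂ (-t) h1 hq0 h2 h.1 hlt)
    · exact not_beyond K ρ₁ hρ₁ hout w₂ q w₁ hw₂F hq hw₁K
        (hqne w₁ (ne_of_gt h.1))
        (openseg_helper b x w₂ q w₁ (-t) h2 hq0 h1 h.2 hgt)
  rcases le_total c₁ c₂ with hle | hle
  · refine seg_helper b x w₁ w₂ q (-t) h1 h2 hq0 ?_ ?_
    · have h' := low; rw [min_eq_left hle] at h'; exact h'
    · have h' := high; rw [max_eq_right hle] at h'; exact h'
  · rw [segment_symm]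
    refine seg_helper b x w₂ w₁ q (-t) h2 h1 hq0 ?_ ?_
    · have h' := low; rw [min_eq_right hle] at h'; exact h'
    · have h' := high; rw [max_eq_left hle] at h'; exact h'





/-- volume of shrink -/
lemma volume_shrink (c : E2) (S : Set E2) :
    (volume (shrink c S)).toReal = (volume S).toReal / 400 := by
  have hf : (fun p : E2 => c + (20:ℝ)⁻¹ • (p - c)) = ⇑(AffineMap.homothety c ((20:ℝ)⁻¹)) := by
    funext p
    rw [AffineMap.homothety_apply]
    simp only [vsub_eq_sub, vadd_eq_add]
    abel
  have h : shrink c S = ⇑(AffineMap.homothety c ((20:ℝ)⁻¹)) '' S := by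
    unfold shrink; rw [hf]
  rw [h, MeasureTheory.Measure.addHaar_image_homothety, finrank_euclideanSpace_fin,
    ENNReal.toReal_mul, ENNReal.toReal_ofReal (by positivity)]
  rw [show |((20:ℝ)⁻¹) ^ 2| = 1/400 by norm_num [abs_of_pos]]
  ring

set_option maxHeartbeats 1000000 in
theorem capTriangle_area_bounds
    (K : Set E2) (hK : IsCompact K) (hKconv : Convex ℝ K)
    (hKint : (interior K).Nonempty)
    (ρ₀ ρ₁ : ℝ) (hρ₀ : 0 < ρ₀) (hρ₀₁ : ρ₀ ≤ ρ₁) (hρ₁ : ρ₁ < 1)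
    (hin : DiscSlidesFreelyIn K ρ₀) (hout : SlidesFreelyInDisc K ρ₁) :
    ∃ c₁ > (0:ℝ), ∃ c₂ > (0:ℝ), ∃ t₀ > (0:ℝ),
      ∀ x ∈ frontier K, ∀ u : E2, IsOuterNormal K x u →
      ∀ t : ℝ, 0 < t → t ≤ t₀ →
      ∀ w₁ w₂ : E2, w₁ ≠ w₂ →
        w₁ ∈ frontier K → (inner ℝ (w₁ - x) u : ℝ) = -t →
        w₂ ∈ frontier K → (inner ℝ (w₂ - x) u : ℝ) = -t →
        (c₁ * t ^ ((3:ℝ)/2) ≤ (volume (capTriangle x w₁ w₂)).toReal ∧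
          (volume (capTriangle x w₁ w₂)).toReal ≤ c₂ * t ^ ((3:ℝ)/2)) ∧
        ∀ j : Fin 3,
          c₁ / 400 * t ^ ((3:ℝ)/2)
              ≤ (volume (shrink (![x, w₁, w₂] j) (capTriangle x w₁ w₂))).toReal ∧
            (volume (shrink (![x, w₁, w₂] j) (capTriangle x w₁ w₂))).toReal
              ≤ c₂ / 400 * t ^ ((3:ℝ)/2) := by
  have hρ₁pos : 0 < ρ₁ := lt_of_lt_of_le hρ₀ hρ₀₁
  refine ⟨Real.sqrt ρ₀ / 2, by positivity, 2 * Real.sqrt 2, by positivity, ρ₀, hρ₀, ?_⟩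
  intro x hx u hu t ht ht₀ w₁ w₂ hne hw₁F hw₁ip hw₂F hw₂ip
  have hKcl : IsClosed K := hK.isClosed
  have hFK : frontier K ⊆ K := hKcl.frontier_subset
  have hxK : x ∈ K := hFK hx
  have hw₁K : w₁ ∈ K := hFK hw₁F
  have hw₂K : w₂ ∈ K := hFK hw₂F
  obtain ⟨hu1, hnormal⟩ := hu
  -- build an orthonormal basis with b 0 = u
  have horth : Orthonormal ℝ (({0} : Set (Fin 2)).restrict (fun _ : Fin 2 => u)) := by
    constructor
    · intro i; exact hu1
    · intro i j hij
      exfalso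
      apply hij
      have hi := i.2
      have hj := j.2
      simp only [Set.mem_singleton_iff] at hi hj
      exact Subtype.ext (hi.trans hj.symm)
  have hcard : Module.finrank ℝ E2 = Fintype.card (Fin 2) := by
    simp [finrank_euclideanSpace_fin]
  obtain ⟨b, hb⟩ := horth.exists_orthonormalBasis_extension_of_card_eq hcard
  have hb0 : b 0 = u := hb 0 rfl
  -- coordinates of w₁, w₂
  have hw₁c0 : (⟪b 0, w₁ - x⟫ : ℝ) = -t := by rw [hb0, real_inner_comm]; exact hw₁ip
  have hw₂c0 : (⟪b 0, w₂ - x⟫ : ℝ) = -t := by rw [hb0, real_inner_comm]; exact hw₂ip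
  -- the centres of the tangent balls
  obtain ⟨v₀, hv₀d, hv₀sub⟩ := hin x hx
  have hv₀ : v₀ = x - ρ₀ • u := inner_center K x u hu1 hnormal ρ₀ hρ₀ v₀ hv₀d hv₀sub
  rw [hv₀] at hv₀sub
  obtain ⟨v₁, hv₁d, hv₁sub⟩ := hout x hx
  have hv₁ : v₁ = x - ρ₁ • u :=
    outer_center K x u hu1 ρ₀ ρ₁ hρ₀ hρ₀₁ hv₀sub v₁ hv₁d hv₁sub
  rw [hv₁] at hv₁sub
  -- second coordinates of points of K at depth t are bounded by √(2t)
  have habs : ∀ w : E2, w ∈ K → (⟪b 0, w - x⟫ : ℝ) = -t →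
      |(⟪b 1, w - x⟫ : ℝ)| ≤ Real.sqrt (2 * t) := by
    intro w hwK hwc0
    set cw : ℝ := ⟪b 1, w - x⟫ with hcw
    have hmem := hv₁sub hwK
    rw [Metric.mem_closedBall, dist_eq_norm] at hmem
    have hrepr : w - (x - ρ₁ • u) = (ρ₁ - t) • b 0 + cw • b 1 := by
      have hd := decomp b x w
      rw [hwc0, ← hcw] at hd
      rw [hd, hb0]
      module
    have hsq : (ρ₁ - t) ^ 2 + cw ^ 2 ≤ ρ₁ ^ 2 := by
      have := norm_comb b (ρ₁ - t) cw
      rw [← hrepr] at this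
      nlinarith [norm_nonneg (w - (x - ρ₁ • u))]
    have hcw2 : cw ^ 2 ≤ 2 * t := by nlinarith
    calc |cw| = Real.sqrt (cw ^ 2) := (Real.sqrt_sq_eq_abs cw).symm
      _ ≤ Real.sqrt (2 * t) := Real.sqrt_le_sqrt hcw2
  -- the inner chord points
  set s : ℝ := Real.sqrt (ρ₀ * t) with hs
  have hs0 : 0 < s := Real.sqrt_pos.mpr (by positivity)
  have hssq : s ^ 2 = ρ₀ * t := Real.sq_sqrt (by positivity)
  set pm : E2 := x + (-t) • b 0 + (-s) • b 1 with hpm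
  set pp : E2 := x + (-t) • b 0 + s • b 1 with hpp
  have hpK : ∀ e : ℝ, |e| ≤ s → x + (-t) • b 0 + e • b 1 ∈ K := by
    intro e he
    apply hv₀sub
    rw [Metric.mem_closedBall, dist_eq_norm]
    have hrepr : x + (-t) • b 0 + e • b 1 - (x - ρ₀ • u) = (ρ₀ - t) • b 0 + e • b 1 := by
      rw [hb0]; module
    rw [hrepr]
    have hn := norm_comb b (ρ₀ - t) e
    set N : ℝ := ‖(ρ₀ - t) • b 0 + e • b 1‖ with hN
    have hNnn : 0 ≤ N := norm_nonneg _
    have he2 : e ^ 2 ≤ ρ₀ * t := by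
      nlinarith [mul_self_le_mul_self (abs_nonneg e) he, sq_abs e, hssq]
    have hN2 : N ^ 2 ≤ ρ₀ ^ 2 := by rw [hn]; nlinarith
    nlinarith [hN2, hNnn, hρ₀]
  have hpmK : pm ∈ K := hpm ▸ hpK (-s) (by rw [abs_neg, abs_of_pos hs0])
  have hppK : pp ∈ K := hpp ▸ hpK s (by rw [abs_of_pos hs0])
  -- the triangle
  set T : Set E2 := capTriangle x w₁ w₂ with hT
  have hTconv : Convex ℝ T := convex_convexHull ℝ _
  have hxT : x ∈ T := subset_convexHull ℝ _ (by simp)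
  have hw₁T : w₁ ∈ T := subset_convexHull ℝ _ (by simp)
  have hw₂T : w₂ ∈ T := subset_convexHull ℝ _ (by simp)
  have hsegT : segment ℝ w₁ w₂ ⊆ T := hTconv.segment_subset hw₁T hw₂T
  have hpmT : pm ∈ T := hsegT (between_seg K ρ₁ hρ₁pos hout b x t w₁ w₂ pm
    hw₁F hw₂F hw₁K hw₂K hpmK hne hw₁c0 hw₂c0 (by rw [hpm, coord0]))
  have hppT : pp ∈ T := hsegT (between_seg K ρ₁ hρ₁pos hout b x t w₁ w₂ pp
    hw₁F hw₂F hw₁K hw₂K hppK hne hw₁c0 hw₂c0 (by rw [hpp, coord0]))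
  -- upper bound : T ⊆ Rup
  set r2t : ℝ := Real.sqrt (2 * t) with hr2t
  have hr2t0 : 0 ≤ r2t := Real.sqrt_nonneg _
  set Rup : Set E2 :=
    {z : E2 | (⟪b 0, z - x⟫ : ℝ) ∈ Set.Icc (-t) 0 ∧ (⟪b 1, z - x⟫ : ℝ) ∈ Set.Icc (-r2t) r2t}
    with hRup
  have hTRup : T ⊆ Rup := by
    rw [hT]
    apply convexHull_min _ (convex_coordRect b x _ _ (convex_Icc _ _) (convex_Icc _ _))
    intro z hz
    simp only [Set.mem_insert_iff, Set.mem_singleton_iff] at hz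
    have hzero : ∀ (i : Fin 2), (⟪b i, x - x⟫ : ℝ) = 0 := by
      intro i; rw [sub_self, inner_zero_right]
    rcases hz with rfl | rfl | rfl
    · exact ⟨by rw [hzero 0]; constructor <;> [linarith; linarith],
        by rw [hzero 1]; constructor <;> [linarith; linarith]⟩
    · refine ⟨by rw [hw₁c0]; exact ⟨le_refl _, by linarith⟩, ?_⟩
      have := habs z hw₁K hw₁c0
      exact abs_le.mp this
    · refine ⟨by rw [hw₂c0]; exact ⟨le_refl _, by linarith⟩, ?_⟩
      have := habs z hw₂K hw₂c0
      exact abs_le.mp this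
  have hvolRup : volume Rup = ENNReal.ofReal t * ENNReal.ofReal (2 * r2t) := by
    rw [hRup, volume_coordRect b x _ _ measurableSet_Icc measurableSet_Icc,
      Real.volume_Icc, Real.volume_Icc]
    congr 1 <;> [congr 1; congr 1] <;> ring
  have hRupfin : volume Rup ≠ ⊤ := by
    rw [hvolRup]; exact ENNReal.mul_ne_top ENNReal.ofReal_ne_top ENNReal.ofReal_ne_top
  have hTfin : volume T ≠ ⊤ := by
    intro h
    exact hRupfin (eq_top_iff.mpr (h ▸ measure_mono hTRup))
  -- lower bound: Rlow ⊆ T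
  set Rlow : Set E2 :=
    {z : E2 | (⟪b 0, z - x⟫ : ℝ) ∈ Set.Icc (-t) (-t/2)
        ∧ (⟪b 1, z - x⟫ : ℝ) ∈ Set.Icc (-(s/2)) (s/2)} with hRlow
  have hRlowT : Rlow ⊆ T := by
    intro z hz
    obtain ⟨⟨ha1, ha2⟩, ⟨hc1, hc2⟩⟩ := hz
    set a : ℝ := ⟪b 0, z - x⟫ with haa
    set c : ℝ := ⟪b 1, z - x⟫ with hcc
    have hane : a < 0 := by linarith
    set e : ℝ := c * t / (-a) with he
    have hea : |e| ≤ s := by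
      rw [he, abs_div, abs_mul, abs_of_pos ht, abs_of_pos (by linarith : (0:ℝ) < -a)]
      rw [div_le_iff₀ (by linarith : (0:ℝ) < -a)]
      have : |c| ≤ s / 2 := abs_le.mpr ⟨hc1, hc2⟩
      nlinarith [abs_nonneg c]
    have hyT : x + (-t) • b 0 + e • b 1 ∈ T := by
      apply hTconv.segment_subset hpmT hppT
      apply seg_helper b x pm pp _ (-t) (by simp only [hpm, coord0]) (by simp only [hpp, coord0])
        (by simp only [coord0])
      · simp only [hpm, coord1]
        linarith [(abs_le.mp hea).1]
      · simp only [hpp, coord1]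
        linarith [(abs_le.mp hea).2]
    have hsc : (-(a/t)) * e = c := by
      rw [he]; field_simp
      exact mul_div_cancel_left₀ c (ne_of_lt hane)
    have hz2 := decomp b x z
    rw [← haa, ← hcc] at hz2
    have hcomb : z = (1 + a/t) • x + (-(a/t)) • (x + (-t) • b 0 + e • b 1) := by
      rw [hz2, ← hsc]
      match_scalars
      · ring
      · field_simp
      · ring
    have hat1 : -1 ≤ a/t := by
      rw [neg_le, ← neg_div, div_le_one ht]; linarith
    have hat2 : a/t ≤ 0 := div_nonpos_of_nonpos_of_nonneg hane.le ht.le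
    rw [hcomb]
    exact hTconv hxT hyT (by linarith) (by linarith) (by ring)
  have hvolRlow : volume Rlow = ENNReal.ofReal (t/2) * ENNReal.ofReal s := by
    rw [hRlow, volume_coordRect b x _ _ measurableSet_Icc measurableSet_Icc,
      Real.volume_Icc, Real.volume_Icc]
    congr 1 <;> [congr 1; congr 1] <;> ring
  -- putting the volume bounds together
  have ht32 : t ^ ((3:ℝ)/2) = t * Real.sqrt t := by
    rw [show (3:ℝ)/2 = 1 + 1/2 by norm_num, Real.rpow_add ht, Real.rpow_one,
      ← Real.sqrt_eq_rpow]
  have hlow : Real.sqrt ρ₀ / 2 * t ^ ((3:ℝ)/2) ≤ (volume T).toReal := by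
    have h1 : (volume Rlow).toReal ≤ (volume T).toReal :=
      ENNReal.toReal_mono hTfin (measure_mono hRlowT)
    have h2 : (volume Rlow).toReal = t/2 * s := by
      rw [hvolRlow, ENNReal.toReal_mul, ENNReal.toReal_ofReal (by linarith),
        ENNReal.toReal_ofReal (le_of_lt hs0)]
    have h3 : t/2 * s = Real.sqrt ρ₀ / 2 * t ^ ((3:ℝ)/2) := by
      rw [ht32, hs, Real.sqrt_mul (le_of_lt hρ₀)]
      ring
    linarith [h3 ▸ h2 ▸ h1]
  have hhigh : (volume T).toReal ≤ 2 * Real.sqrt 2 * t ^ ((3:ℝ)/2) := by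
    have h1 : (volume T).toReal ≤ (volume Rup).toReal :=
      ENNReal.toReal_mono hRupfin (measure_mono hTRup)
    have h2 : (volume Rup).toReal = t * (2 * r2t) := by
      rw [hvolRup, ENNReal.toReal_mul, ENNReal.toReal_ofReal (le_of_lt ht),
        ENNReal.toReal_ofReal (by linarith)]
    have h3 : t * (2 * r2t) = 2 * Real.sqrt 2 * t ^ ((3:ℝ)/2) := by
      rw [ht32, hr2t, Real.sqrt_mul (by norm_num : (0:ℝ) ≤ 2)]
      ring
    linarith [h3 ▸ h2 ▸ h1]
  refine ⟨⟨hlow, hhigh⟩, ?_⟩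
  intro j
  rw [volume_shrink]
  constructor
  · have : Real.sqrt ρ₀ / 2 / 400 * t ^ ((3:ℝ)/2)
        = (Real.sqrt ρ₀ / 2 * t ^ ((3:ℝ)/2)) / 400 := by ring
    rw [this]
    linarith
  · have : 2 * Real.sqrt 2 / 400 * t ^ ((3:ℝ)/2)
        = (2 * Real.sqrt 2 * t ^ ((3:ℝ)/2)) / 400 := by ring
    rw [this]
    linarith
end
end

section
/- There exist constants c > 0 and t₀ > 0, depending only on K, such that for every 0 < t ≤ t₀ and all boundary points y, y' ∈ ∂K with |y − y'| ≥ c·√t, the disc-caps D(y,t) and D(y',t) are disjoint. -/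
open MeasureTheory ProbabilityTheory
open scoped RealInnerProductSpace

noncomputable section

/-- If an inner ball of radius ρ₀ touches `y` and `u` is an outer normal, the
center of the inner ball is `y - ρ₀ • u`. -/
lemma inner_ball_center (K : Set E2) (y u w : E2) (ρ₀ : ℝ) (hρ₀ : 0 < ρ₀)
    (hu : IsOuterNormal K y u) (hdw : dist y w = ρ₀)
    (hw : Metric.closedBall w ρ₀ ⊆ K) : w = y - ρ₀ • u := by
  obtain ⟨hu1, hu2⟩ := hu
  have hmem : w + ρ₀ • u ∈ K := by
    apply hw
    simp [Metric.mem_closedBall, dist_eq_norm, norm_smul, abs_of_pos hρ₀, hu1, le_refl]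
  have h1 : (inner ℝ (w + ρ₀ • u - y) u : ℝ) ≤ 0 := hu2 _ hmem
  have hip : (inner ℝ (w - y) u : ℝ) ≤ -ρ₀ := by
    have : (inner ℝ (w + ρ₀ • u - y) u : ℝ)
        = inner ℝ (w - y) u + ρ₀ * (inner ℝ u u : ℝ) := by
      rw [show w + ρ₀ • u - y = (w - y) + ρ₀ • u by abel, inner_add_left,
        real_inner_smul_left]
    rw [this, real_inner_self_eq_norm_sq, hu1] at h1
    nlinarith
  have hnorm : ‖w - y‖ = ρ₀ := by rw [← dist_eq_norm, dist_comm]; exact hdw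
  have hcs : -(‖w - y‖ * ‖u‖) ≤ (inner ℝ (w - y) u : ℝ) :=
    neg_le_of_abs_le (abs_real_inner_le_norm _ _)
  have hip' : (inner ℝ (w - y) u : ℝ) = -ρ₀ := by
    rw [hnorm, hu1, mul_one] at hcs; linarith
  have hz : ‖(w - y) + ρ₀ • u‖ ^ 2 = 0 := by
    rw [norm_add_sq_real, real_inner_smul_right, norm_smul, hip', hnorm,
      Real.norm_eq_abs, abs_of_pos hρ₀, hu1]
    ring
  have : (w - y) + ρ₀ • u = 0 := by
    have := pow_eq_zero_iff (n := 2) (by norm_num) |>.mp hz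
    exact norm_eq_zero.mp this
  have : w - y = -(ρ₀ • u) := by linear_combination (norm := abel) this
  rw [sub_eq_iff_eq_add] at this
  rw [this]; abel

/-- With both sliding conditions and outer normal `u` at `y`,
`K ⊆ closedBall (y - ρ₁ • u) ρ₁`. -/
lemma outer_ball (K : Set E2) (y u : E2) (ρ₀ ρ₁ : ℝ)
    (hρ₀ : 0 < ρ₀) (hρ₁ : 0 < ρ₁)
    (hin : DiscSlidesFreelyIn K ρ₀) (hout : SlidesFreelyInDisc K ρ₁)
    (hy : y ∈ frontier K) (hu : IsOuterNormal K y u) :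
    K ⊆ Metric.closedBall (y - ρ₁ • u) ρ₁ := by
  obtain ⟨v, hdv, hv⟩ := hout y hy
  obtain ⟨w, hdw, hw⟩ := hin y hy
  -- n := ρ₁⁻¹ • (y - v) is an outer normal at y
  have hyv : ‖y - v‖ = ρ₁ := by rw [← dist_eq_norm]; exact hdv
  have hn : IsOuterNormal K y (ρ₁⁻¹ • (y - v)) := by
    constructor
    · rw [norm_smul, hyv, Real.norm_eq_abs, abs_of_pos (inv_pos.mpr hρ₁)]
      field_simp
    · intro z hz
      rw [real_inner_smul_right]
      have hcs : (inner ℝ (z - v) (y - v) : ℝ) ≤ ‖z - v‖ * ‖y - v‖ :=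
        real_inner_le_norm _ _
      have hzv : ‖z - v‖ ≤ ρ₁ := by
        have := hv hz; rwa [Metric.mem_closedBall, dist_eq_norm] at this
      have : (inner ℝ (z - y) (y - v) : ℝ)
          = inner ℝ (z - v) (y - v) - (inner ℝ (y - v) (y - v) : ℝ) := by
        rw [← inner_sub_left]; congr 1; abel
      rw [this, real_inner_self_eq_norm_sq, hyv]
      have : (inner ℝ (z - v) (y - v) : ℝ) ≤ ρ₁ * ρ₁ := by
        calc (inner ℝ (z - v) (y - v) : ℝ) ≤ ‖z - v‖ * ‖y - v‖ := hcs
        _ ≤ ρ₁ * ρ₁ := by rw [hyv]; exact mul_le_mul_of_nonneg_right hzv hρ₁.le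
      have h0 : (0:ℝ) ≤ ρ₁⁻¹ := (inv_pos.mpr hρ₁).le
      nlinarith
  have e1 := inner_ball_center K y u w ρ₀ hρ₀ hu hdw hw
  have e2 := inner_ball_center K y (ρ₁⁻¹ • (y - v)) w ρ₀ hρ₀ hn hdw hw
  have hun : u = ρ₁⁻¹ • (y - v) := by
    have : ρ₀ • u = ρ₀ • (ρ₁⁻¹ • (y - v)) := by
      have := e1.symm.trans e2
      have h := sub_eq_sub_iff_sub_eq_sub.mp this.symm
      simpa using this
    exact smul_right_injective E2 hρ₀.ne' this
  have hv' : v = y - ρ₁ • u := by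
    rw [hun, smul_smul, mul_inv_cancel₀ hρ₁.ne', one_smul]
    abel
  rwa [← hv']

/-- Any point of a disc-cap of height `t ≤ 1` is within `√(3/(1-ρ₁))·√t` of the vertex. -/
lemma discCap_dist_le (K : Set E2) (y u : E2) (ρ₀ ρ₁ t : ℝ)
    (hρ₀ : 0 < ρ₀) (hρ₀₁ : ρ₀ ≤ ρ₁) (hρ₁ : ρ₁ < 1)
    (hin : DiscSlidesFreelyIn K ρ₀) (hout : SlidesFreelyInDisc K ρ₁)
    (hy : y ∈ frontier K) (hu : IsOuterNormal K y u)
    (ht : 0 < t) (ht1 : t ≤ 1)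
    {z : E2} (hz : z ∈ discCap K y u t) :
    dist z y ≤ Real.sqrt (3 / (1 - ρ₁)) * Real.sqrt t := by
  have hρ₁pos : 0 < ρ₁ := lt_of_lt_of_le hρ₀ hρ₀₁
  obtain ⟨hzK, hzB⟩ := hz
  have hout' := outer_ball K y u ρ₀ ρ₁ hρ₀ hρ₁pos hin hout hy hu
  have h1 : ‖(z - y) + ρ₁ • u‖ ≤ ρ₁ := by
    have := hout' hzK
    rw [Metric.mem_closedBall, dist_eq_norm] at this
    rwa [show z - (y - ρ₁ • u) = z - y + ρ₁ • u by abel] at this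
  have h2 : (1:ℝ) ≤ ‖(z - y) + (1 + t) • u‖ := by
    rw [Metric.mem_ball, dist_eq_norm, not_lt] at hzB
    rwa [show z - (y - (1 + t) • u) = z - y + (1 + t) • u by abel] at hzB
  obtain ⟨hu1, _⟩ := hu
  set a := z - y with ha
  set ip : ℝ := inner ℝ a u with hip
  have e1 : ‖a‖ ^ 2 + 2 * ρ₁ * ip + ρ₁ ^ 2 ≤ ρ₁ ^ 2 := by
    have := pow_le_pow_left₀ (norm_nonneg _) h1 2
    rw [norm_add_sq_real, real_inner_smul_right, norm_smul, Real.norm_eq_abs,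
      abs_of_pos hρ₁pos, hu1, mul_one] at this
    nlinarith [this]
  have e2 : (1:ℝ) ≤ ‖a‖ ^ 2 + 2 * (1 + t) * ip + (1 + t) ^ 2 := by
    have := pow_le_pow_left₀ (by norm_num : (0:ℝ) ≤ 1) h2 2
    rw [norm_add_sq_real, real_inner_smul_right, norm_smul, Real.norm_eq_abs,
      abs_of_pos (by linarith : (0:ℝ) < 1 + t), hu1, mul_one] at this
    nlinarith [this]
  have hsq : ‖a‖ ^ 2 ≤ 3 / (1 - ρ₁) * t := by
    rw [div_mul_eq_mul_div, le_div_iff₀ (by linarith)]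
    have e1' : ‖a‖ ^ 2 ≤ 2 * ρ₁ * (-ip) := by linarith
    have hq : (0:ℝ) ≤ -ip := by nlinarith [sq_nonneg ‖a‖]
    have hkey : 2 * (1 - ρ₁ + t) * (-ip) ≤ 3 * t := by nlinarith
    have hx1 : (0:ℝ) ≤ (-ip) * ((1 - ρ₁)^2 + t) :=
      mul_nonneg hq (by positivity)
    have hx2 : ‖a‖ ^ 2 * (1 - ρ₁) ≤ 2 * ρ₁ * (-ip) * (1 - ρ₁) :=
      mul_le_mul_of_nonneg_right e1' (by linarith)
    nlinarith [hx1, hx2, hkey]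
  have hfin : ‖a‖ ≤ Real.sqrt (3 / (1 - ρ₁) * t) := by
    rw [show ‖a‖ = Real.sqrt (‖a‖ ^ 2) by rw [Real.sqrt_sq (norm_nonneg _)]]
    exact Real.sqrt_le_sqrt hsq
  rw [dist_eq_norm, ← ha]
  calc ‖a‖ ≤ Real.sqrt (3 / (1 - ρ₁) * t) := hfin
  _ = Real.sqrt (3 / (1 - ρ₁)) * Real.sqrt t := Real.sqrt_mul (div_nonneg (by norm_num) (by linarith)) t

theorem discCaps_disjoint_of_separated
    (K : Set E2) (hK : IsCompact K) (hKconv : Convex ℝ K)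
    (hKint : (interior K).Nonempty)
    (ρ₀ ρ₁ : ℝ) (hρ₀ : 0 < ρ₀) (hρ₀₁ : ρ₀ ≤ ρ₁) (hρ₁ : ρ₁ < 1)
    (hin : DiscSlidesFreelyIn K ρ₀) (hout : SlidesFreelyInDisc K ρ₁) :
    ∃ c > (0:ℝ), ∃ t₀ > (0:ℝ), ∀ t : ℝ, 0 < t → t ≤ t₀ →
      ∀ y ∈ frontier K, ∀ y' ∈ frontier K,
      ∀ u u' : E2, IsOuterNormal K y u → IsOuterNormal K y' u' →
        c * Real.sqrt t ≤ dist y y' →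
        Disjoint (discCap K y u t) (discCap K y' u' t) := by
  refine ⟨2 * Real.sqrt (3 / (1 - ρ₁)) + 1, by have := Real.sqrt_nonneg (3 / (1 - ρ₁)); linarith, 1, one_pos, ?_⟩
  intro t ht ht1 y hy y' hy' u u' hu hu' hsep
  rw [Set.disjoint_left]
  intro z hz hz'
  have d1 := discCap_dist_le K y u ρ₀ ρ₁ t hρ₀ hρ₀₁ hρ₁ hin hout hy hu ht ht1 hz
  have d2 := discCap_dist_le K y' u' ρ₀ ρ₁ t hρ₀ hρ₀₁ hρ₁ hin hout hy' hu' ht ht1 hz'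
  have htri : dist y y' ≤ dist z y + dist z y' := by
    rw [dist_comm z y]; exact dist_triangle _ _ _
  have hst : 0 < Real.sqrt t := Real.sqrt_pos.mpr ht
  nlinarith [hsep, htri, d1, d2]
end
end
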